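/- For the mixture bounds of Lemma 2, equality H_n(x,y) = F(x,y) = K_n(x,y) for all (x,y) holds if and only if (p_1,...,p_n) = (1/n, ..., 1/n), provided the maps r ↦ F_{r:n}(x,y) are not all equal for some (x,y) (e.g., F strictly increasing). -/

import Mathlib

open MeasureTheory
open Set Filter Topology ENNReal

/-- Marginal CDF of `X` for the joint density `f`. -/
noncomputable def margCDF (f : ℝ → ℝ → ℝ) (x : ℝ) : ℝ :=
  ∫ u in Set.Iic x, ∫ v, f u v

/-- Joint CDF of `(X,Y)` with joint density `f`. -/
noncomputable def jointCDF (f : ℝ → ℝ → ℝ) (x y : ℝ) : ℝ :=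
  ∫ u in Set.Iic x, ∫ v in Set.Iic y, f u v

/-- Joint CDF `F_{r:n}` of the `r`-th order statistic and its concomitant. -/
noncomputable def concomCDF (f : ℝ → ℝ → ℝ) (n r : ℕ) (x y : ℝ) : ℝ :=
  (n : ℝ) * (n - 1).choose (r - 1) *
    ∫ u in Set.Iic x,
      (margCDF f u) ^ (r - 1) * (1 - margCDF f u) ^ (n - r) *
        ∫ v in Set.Iic y, f u v



lemma aux_ae_zero {h : ℝ → ℝ} (hi : Integrable h) (h0 : ∀ x : ℝ, ∫ u in Set.Iic x, h u = 0) :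
    ∀ᵐ u : ℝ, h u = 0 := by
  set ν₁ := volume.withDensity (fun u => ENNReal.ofReal (h u)) with hv1
  set ν₂ := volume.withDensity (fun u => ENNReal.ofReal (-h u)) with hv2
  have hmeas := hi.aestronglyMeasurable.aemeasurable
  have hm1 : AEMeasurable (fun u => ENNReal.ofReal (h u)) volume :=
    ENNReal.measurable_ofReal.comp_aemeasurable hmeas
  have hm2 : AEMeasurable (fun u => ENNReal.ofReal (-h u)) volume :=
    ENNReal.measurable_ofReal.comp_aemeasurable hmeas.neg
  haveI h1 : IsFiniteMeasure ν₁ := isFiniteMeasure_withDensity_ofReal hi.hasFiniteIntegral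
  haveI h2 : IsFiniteMeasure ν₂ := isFiniteMeasure_withDensity_ofReal hi.neg.hasFiniteIntegral
  have hIic : ∀ x : ℝ, ν₁ (Set.Iic x) = ν₂ (Set.Iic x) := by
    intro x
    have e1 : ν₁ (Set.Iic x) = ∫⁻ u in Set.Iic x, ENNReal.ofReal (h u) :=
      withDensity_apply _ measurableSet_Iic
    have e2 : ν₂ (Set.Iic x) = ∫⁻ u in Set.Iic x, ENNReal.ofReal (-h u) :=
      withDensity_apply _ measurableSet_Iic
    have := integral_eq_lintegral_pos_part_sub_lintegral_neg_part
      (hi.restrict (s := Set.Iic x))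
    rw [h0 x] at this
    have hne1 : ν₁ (Set.Iic x) ≠ ⊤ := measure_ne_top _ _
    have hne2 : ν₂ (Set.Iic x) ≠ ⊤ := measure_ne_top _ _
    rw [e1] at hne1
    rw [e2] at hne2
    rw [e1, e2]
    have : (∫⁻ u in Set.Iic x, ENNReal.ofReal (h u)).toReal
        = (∫⁻ u in Set.Iic x, ENNReal.ofReal (-h u)).toReal := by linarith
    exact (ENNReal.toReal_eq_toReal_iff' hne1 hne2).mp this
  have hEq : ν₁ = ν₂ := MeasureTheory.Measure.ext_of_Iic ν₁ ν₂ hIic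
  have hfi : ∫⁻ u, ENNReal.ofReal (h u) ≠ ⊤ := by
    have : ν₁ Set.univ ≠ ⊤ := measure_ne_top _ _
    rwa [hv1, withDensity_apply _ MeasurableSet.univ, setLIntegral_univ] at this
  have hae : (fun u => ENNReal.ofReal (h u)) =ᵐ[volume] (fun u => ENNReal.ofReal (-h u)) :=
    (withDensity_eq_iff hm1 hm2 hfi).mp hEq
  filter_upwards [hae] with u hu
  by_contra hne
  rcases lt_or_gt_of_ne hne with hlt | hgt
  · have : ENNReal.ofReal (h u) = 0 := ENNReal.ofReal_eq_zero.mpr hlt.le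
    rw [this] at hu
    have := ENNReal.ofReal_eq_zero.mp hu.symm
    linarith
  · have : ENNReal.ofReal (-h u) = 0 := ENNReal.ofReal_eq_zero.mpr (by linarith)
    rw [this] at hu
    have := ENNReal.ofReal_eq_zero.mp hu
    linarith


lemma aux_Ioc_integral {m t : ℝ → ℝ} (hm : Integrable m)
    (ht : ∀ u, t u = ∫ v in Set.Iic u, m v) {a b : ℝ} (hab : a ≤ b) :
    ∫ v in Set.Ioc a b, m v = t b - t a := by
  have hdisj : Disjoint (Set.Iic a) (Set.Ioc a b) := by
    rw [Set.disjoint_left]; rintro x hx ⟨h1,h2⟩; exact absurd hx (not_le.mpr h1)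
  have hunion : Set.Iic a ∪ Set.Ioc a b = Set.Iic b := Set.Iic_union_Ioc_eq_Iic hab
  have := setIntegral_union hdisj measurableSet_Ioc
    (hm.integrableOn (s := Set.Iic a)) (hm.integrableOn (s := Set.Ioc a b))
  rw [hunion] at this
  rw [ht b, ht a, this]; ring

lemma aux_preimage_null {m t : ℝ → ℝ} (hm : Integrable m) (hm0 : ∀ u, 0 ≤ m u)
    (ht : ∀ u, t u = ∫ v in Set.Iic u, m v) (c : ℝ) :
    (volume.withDensity fun u => ENNReal.ofReal (m u)) (t ⁻¹' {c}) = 0 := by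
  set ν := volume.withDensity fun u => ENNReal.ofReal (m u) with hν
  have tmono : Monotone t := by
    intro a b hab
    rw [ht a, ht b]
    exact setIntegral_mono_set hm.integrableOn
      (Eventually.of_forall (fun u => hm0 u)) (HasSubset.Subset.eventuallyLE (Set.Iic_subset_Iic.mpr hab))
  have hIoc : ∀ a b : ℝ, t a = c → t b = c → ν (Set.Ioc a b) = 0 := by
    intro a b ha hb
    rcases le_or_gt b a with h | h
    · rw [Set.Ioc_eq_empty (by exact fun hh => absurd hh (not_lt.mpr h)), measure_empty]
    · have : ν (Set.Ioc a b) = ∫⁻ u in Set.Ioc a b, ENNReal.ofReal (m u) :=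
        withDensity_apply _ measurableSet_Ioc
      rw [this, ← ofReal_integral_eq_lintegral_ofReal hm.integrableOn
        (Eventually.of_forall (fun u => hm0 u)),
        aux_Ioc_integral hm ht h.le, ha, hb, sub_self, ENNReal.ofReal_zero]
  set U : Set ℝ := ⋃ (q : ℚ × ℚ) (_ : t (q.1 : ℝ) = c ∧ t (q.2 : ℝ) = c),
      Set.Ioc (q.1 : ℝ) (q.2 : ℝ) with hU
  have hUnull : ν U = 0 := by
    refine measure_iUnion_null fun q => measure_iUnion_null fun hq => hIoc _ _ hq.1 hq.2
  set L : Set ℝ := {w | t w = c ∧ ∀ u, t u = c → w ≤ u} with hL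
  set R : Set ℝ := {w | t w = c ∧ ∀ u, t u = c → u ≤ w} with hR
  have hLsub : L.Subsingleton := fun x hx y hy => le_antisymm (hx.2 y hy.1) (hy.2 x hx.1)
  have hRsub : R.Subsingleton := fun x hx y hy => le_antisymm (hy.2 x hx.1) (hx.2 y hy.1)
  have hac : ν ≪ volume := withDensity_absolutelyContinuous _ _
  have hE : t ⁻¹' {c} ⊆ U ∪ (L ∪ R) := by
    intro w hw
    have hwc : t w = c := hw
    by_cases hwL : ∀ u, t u = c → w ≤ u
    · exact Or.inr (Or.inl ⟨hwc, hwL⟩)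
    by_cases hwR : ∀ u, t u = c → u ≤ w
    · exact Or.inr (Or.inr ⟨hwc, hwR⟩)
    push_neg at hwL hwR
    obtain ⟨u, hu, huw⟩ := hwL
    obtain ⟨v, hv, hwv⟩ := hwR
    obtain ⟨q₁, hq₁⟩ := exists_rat_btwn huw
    obtain ⟨q₂, hq₂⟩ := exists_rat_btwn hwv
    have hq₁c : t (q₁ : ℝ) = c :=
      le_antisymm (hwc ▸ tmono hq₁.2.le) (hu ▸ tmono hq₁.1.le)
    have hq₂c : t (q₂ : ℝ) = c :=
      le_antisymm (hv ▸ tmono hq₂.2.le) (hwc ▸ tmono hq₂.1.le)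
    refine Or.inl ?_
    rw [hU]
    refine Set.mem_iUnion.mpr ⟨(q₁, q₂), Set.mem_iUnion.mpr ⟨⟨hq₁c, hq₂c⟩, ?_⟩⟩
    exact ⟨hq₁.2, hq₂.1.le⟩
  refine le_antisymm ?_ zero_le
  calc ν (t ⁻¹' {c}) ≤ ν (U ∪ (L ∪ R)) := measure_mono hE
    _ ≤ ν U + ν (L ∪ R) := measure_union_le _ _
    _ ≤ ν U + (ν L + ν R) := by gcongr; exact measure_union_le _ _
    _ = 0 := by
        rw [hUnull, hac (hLsub.measure_zero volume), hac (hRsub.measure_zero volume)]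
        simp

section infra
variable {f : ℝ → ℝ → ℝ}

lemma hint' (hint : Integrable fun p : ℝ × ℝ => f p.1 p.2) :
    Integrable (fun p : ℝ × ℝ => f p.1 p.2) (volume.prod volume) := by
  exact hint

lemma m_int (hint : Integrable fun p : ℝ × ℝ => f p.1 p.2) :
    Integrable (fun u => ∫ v, f u v) := (hint' hint).integral_prod_left

lemma m_nonneg (hpos : ∀ u v, 0 ≤ f u v) (u : ℝ) : 0 ≤ ∫ v, f u v :=
  integral_nonneg (hpos u)

lemma m_total (hint : Integrable fun p : ℝ × ℝ => f p.1 p.2)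
    (hprob : ∫ p : ℝ × ℝ, f p.1 p.2 = 1) : ∫ u, ∫ v, f u v = 1 := by
  have := integral_integral (f := fun u v => f u v) (hint' hint)
  rw [this, ← Measure.volume_eq_prod, hprob]

lemma t_mono (hint : Integrable fun p : ℝ × ℝ => f p.1 p.2)
    (hpos : ∀ u v, 0 ≤ f u v) : Monotone (margCDF f) := by
  intro a b hab
  exact setIntegral_mono_set (m_int hint).integrableOn
    (Eventually.of_forall (m_nonneg hpos))
    (HasSubset.Subset.eventuallyLE (Set.Iic_subset_Iic.mpr hab))

lemma t_nonneg (hpos : ∀ u v, 0 ≤ f u v) (u : ℝ) : 0 ≤ margCDF f u :=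
  setIntegral_nonneg measurableSet_Iic (fun v _ => m_nonneg hpos v)

lemma t_le_one (hint : Integrable fun p : ℝ × ℝ => f p.1 p.2)
    (hpos : ∀ u v, 0 ≤ f u v) (hprob : ∫ p : ℝ × ℝ, f p.1 p.2 = 1) (u : ℝ) :
    margCDF f u ≤ 1 := by
  rw [← m_total hint hprob]
  exact setIntegral_le_integral (m_int hint) (Eventually.of_forall (m_nonneg hpos))

lemma w_eq (y : ℝ) :
    (fun u => ∫ v in Set.Iic y, f u v)
      = fun u => ∫ v, ({p : ℝ × ℝ | p.2 ∈ Set.Iic y}.indicator (fun p => f p.1 p.2)) (u, v) := by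
  funext u
  rw [← integral_indicator measurableSet_Iic]
  congr 1

lemma w_int (hint : Integrable fun p : ℝ × ℝ => f p.1 p.2) (y : ℝ) :
    Integrable (fun u => ∫ v in Set.Iic y, f u v) := by
  rw [w_eq]
  exact ((hint' hint).indicator (measurableSet_Iic.preimage measurable_snd)).integral_prod_left

lemma w_nonneg (hpos : ∀ u v, 0 ≤ f u v) (y u : ℝ) : 0 ≤ ∫ v in Set.Iic y, f u v :=
  setIntegral_nonneg measurableSet_Iic (fun v _ => hpos u v)

lemma kernel_bdd (hint : Integrable fun p : ℝ × ℝ => f p.1 p.2)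
    (hpos : ∀ u v, 0 ≤ f u v) (hprob : ∫ p : ℝ × ℝ, f p.1 p.2 = 1)
    (i j : ℕ) (u : ℝ) : |margCDF f u ^ i * (1 - margCDF f u) ^ j| ≤ 1 := by
  have h0 := t_nonneg hpos u
  have h1 := t_le_one hint hpos hprob u
  rw [abs_mul, abs_pow, abs_pow]
  have ha : |margCDF f u| ≤ 1 := by rw [abs_le]; constructor <;> linarith
  have hb : |1 - margCDF f u| ≤ 1 := by rw [abs_le]; constructor <;> linarith
  have hai : |margCDF f u| ^ i ≤ 1 := pow_le_one₀ (abs_nonneg _) ha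
  have hbj : |1 - margCDF f u| ^ j ≤ 1 := pow_le_one₀ (abs_nonneg _) hb
  have := pow_nonneg (abs_nonneg (1 - margCDF f u)) j
  nlinarith [pow_nonneg (abs_nonneg (margCDF f u)) i]

lemma kernel_w_int (hmeas : Measurable fun p : ℝ × ℝ => f p.1 p.2)
    (hint : Integrable fun p : ℝ × ℝ => f p.1 p.2)
    (hpos : ∀ u v, 0 ≤ f u v) (hprob : ∫ p : ℝ × ℝ, f p.1 p.2 = 1)
    (i j : ℕ) (y : ℝ) :
    Integrable (fun u => margCDF f u ^ i * (1 - margCDF f u) ^ j * ∫ v in Set.Iic y, f u v) := by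
  have htm : Measurable (margCDF f) := (t_mono hint hpos).measurable
  exact (w_int hint y).bdd_mul
    ((htm.pow_const i).mul ((measurable_const.sub htm).pow_const j)).aestronglyMeasurable
    (Eventually.of_forall fun u => by rw [Real.norm_eq_abs]; exact kernel_bdd hint hpos hprob i j u)
end infra

lemma binom_sum {n : ℕ} (hn : 1 ≤ n) (a b : ℝ) (hab : a + b = 1) :
    ∑ r ∈ Finset.Icc 1 n, ((n : ℝ) * ((n - 1).choose (r - 1) : ℕ)) * (a ^ (r - 1) * b ^ (n - r))
      = n := by
  have h1 : ∑ r ∈ Finset.Icc 1 n, (((n - 1).choose (r - 1) : ℝ)) * (a ^ (r - 1) * b ^ (n - r))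
      = 1 := by
    rw [← Finset.Ico_add_one_right_eq_Icc, Finset.sum_Ico_eq_sum_range]
    have hr : n + 1 - 1 = (n - 1) + 1 := by omega
    rw [hr]
    have := add_pow a b (n - 1)
    rw [hab, one_pow] at this
    calc ∑ k ∈ Finset.range (n - 1 + 1),
          (((n - 1).choose (1 + k - 1) : ℝ)) * (a ^ (1 + k - 1) * b ^ (n - (1 + k)))
        = ∑ m ∈ Finset.range (n - 1 + 1), a ^ m * b ^ (n - 1 - m) * ((n - 1).choose m : ℝ) := by
          refine Finset.sum_congr rfl fun i hi => ?_
          rw [Finset.mem_range] at hi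
          have h2 : 1 + i - 1 = i := by omega
          have h3 : n - (1 + i) = n - 1 - i := by omega
          rw [h2, h3]; ring
      _ = 1 := this.symm
  calc ∑ r ∈ Finset.Icc 1 n, ((n : ℝ) * ((n - 1).choose (r - 1) : ℕ)) * (a ^ (r - 1) * b ^ (n - r))
      = (n : ℝ) * ∑ r ∈ Finset.Icc 1 n,
          (((n - 1).choose (r - 1) : ℝ)) * (a ^ (r - 1) * b ^ (n - r)) := by
        rw [Finset.mul_sum]; refine Finset.sum_congr rfl fun r _ => by ring
    _ = n := by rw [h1, mul_one]

lemma concom_eq {f : ℝ → ℝ → ℝ} (n r : ℕ) (x y : ℝ) :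
    concomCDF f n r x y
      = ∫ u in Set.Iic x, ((n : ℝ) * ((n - 1).choose (r - 1) : ℕ))
          * (margCDF f u ^ (r - 1) * (1 - margCDF f u) ^ (n - r) * ∫ v in Set.Iic y, f u v) := by
  rw [concomCDF, ← integral_const_mul]

lemma lemA {f : ℝ → ℝ → ℝ} {n : ℕ} (hn : 1 ≤ n)
    (hmeas : Measurable fun p : ℝ × ℝ => f p.1 p.2)
    (hint : Integrable fun p : ℝ × ℝ => f p.1 p.2)
    (hpos : ∀ u v, 0 ≤ f u v) (hprob : ∫ p : ℝ × ℝ, f p.1 p.2 = 1) (x y : ℝ) :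
    ∑ r ∈ Finset.Icc 1 n, concomCDF f n r x y = n * jointCDF f x y := by
  have hsum : ∑ r ∈ Finset.Icc 1 n, concomCDF f n r x y
      = ∫ u in Set.Iic x, ∑ r ∈ Finset.Icc 1 n, ((n : ℝ) * ((n - 1).choose (r - 1) : ℕ))
          * (margCDF f u ^ (r - 1) * (1 - margCDF f u) ^ (n - r) * ∫ v in Set.Iic y, f u v) := by
    rw [Finset.sum_congr rfl fun r _ => concom_eq (f := f) n r x y]
    exact (integral_finset_sum _ fun r _ =>
      ((kernel_w_int hmeas hint hpos hprob (r - 1) (n - r) y).const_mul _).integrableOn).symm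
  rw [hsum]
  have hpt : ∀ u : ℝ, ∑ r ∈ Finset.Icc 1 n, ((n : ℝ) * ((n - 1).choose (r - 1) : ℕ))
      * (margCDF f u ^ (r - 1) * (1 - margCDF f u) ^ (n - r) * ∫ v in Set.Iic y, f u v)
      = (n : ℝ) * ∫ v in Set.Iic y, f u v := by
    intro u
    have := binom_sum hn (margCDF f u) (1 - margCDF f u) (by ring)
    calc ∑ r ∈ Finset.Icc 1 n, ((n : ℝ) * ((n - 1).choose (r - 1) : ℕ))
        * (margCDF f u ^ (r - 1) * (1 - margCDF f u) ^ (n - r) * ∫ v in Set.Iic y, f u v)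
        = (∑ r ∈ Finset.Icc 1 n, ((n : ℝ) * ((n - 1).choose (r - 1) : ℕ))
            * (margCDF f u ^ (r - 1) * (1 - margCDF f u) ^ (n - r))) * ∫ v in Set.Iic y, f u v := by
          rw [Finset.sum_mul]; exact Finset.sum_congr rfl fun r _ => by ring
      _ = (n : ℝ) * ∫ v in Set.Iic y, f u v := by rw [this]
  rw [integral_congr_ae (Eventually.of_forall (fun u => hpt u)), integral_const_mul]
  rfl

/-- Equality case of Lemma 2: provided the maps `r ↦ F_{r:n}(x,y)` are not all
equal for some `(x,y)`, equality `Hₙ(x,y) = F(x,y) = Kₙ(x,y)` for all `(x,y)`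
holds iff `(p₁,…,pₙ) = (1/n,…,1/n)`. -/
theorem stmt10 (n : ℕ) (hn : 1 ≤ n) (f : ℝ → ℝ → ℝ)
    (hmeas : Measurable fun p : ℝ × ℝ => f p.1 p.2)
    (hpos : ∀ u v, 0 ≤ f u v)
    (hint : Integrable fun p : ℝ × ℝ => f p.1 p.2)
    (hprob : ∫ p : ℝ × ℝ, f p.1 p.2 = 1)
    (p : ℕ → ℝ) (hp0 : ∀ i, 1 ≤ i → i ≤ n → 0 ≤ p i)
    (hpdec : ∀ i j, 1 ≤ i → i ≤ j → j ≤ n → p j ≤ p i)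
    (hp1 : ∑ i ∈ Finset.Icc 1 n, p i = 1)
    (hne : ∃ x y : ℝ, ∃ r s, r ∈ Finset.Icc 1 n ∧ s ∈ Finset.Icc 1 n ∧
      concomCDF f n r x y ≠ concomCDF f n s x y) :
    (∀ x y : ℝ,
        ∑ i ∈ Finset.Icc 1 n, p i * concomCDF f n (n - i + 1) x y = jointCDF f x y ∧
        jointCDF f x y = ∑ i ∈ Finset.Icc 1 n, p i * concomCDF f n i x y) ↔
      ∀ i, 1 ≤ i → i ≤ n → p i = (1 / n : ℝ) := by
  have hn0 : (n : ℝ) ≠ 0 := Nat.cast_ne_zero.mpr (by omega)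
  constructor
  · -- forward direction
    intro hall i hi1 hin
    by_contra hpi
    set q : ℕ → ℝ := fun r => p r - 1 / n with hq
    set t : ℝ → ℝ := margCDF f with htdef
    set c : ℕ → ℝ := fun r => (n : ℝ) * ((n - 1).choose (r - 1) : ℕ) with hc
    have htm : Measurable t := (t_mono hint hpos).measurable
    -- key vanishing of the q-weighted sum
    have keyK : ∀ x y : ℝ, ∑ r ∈ Finset.Icc 1 n, q r * concomCDF f n r x y = 0 := by
      intro x y
      have h2 := (hall x y).2
      have hA := lemA hn hmeas hint hpos hprob x y
      have hsplit : ∑ r ∈ Finset.Icc 1 n, q r * concomCDF f n r x y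
          = (∑ r ∈ Finset.Icc 1 n, p r * concomCDF f n r x y)
            - (1 / n) * ∑ r ∈ Finset.Icc 1 n, concomCDF f n r x y := by
        rw [Finset.mul_sum, ← Finset.sum_sub_distrib]
        exact Finset.sum_congr rfl fun r _ => by simp [hq]; ring
      rw [hsplit, ← h2, hA]
      field_simp
      ring
    -- g and its properties
    set g : ℝ → ℝ := fun u =>
      ∑ r ∈ Finset.Icc 1 n, q r * (c r * (t u ^ (r - 1) * (1 - t u) ^ (n - r))) with hg
    have hgmeas : Measurable g := by
      apply Finset.measurable_sum
      intro r _
      exact measurable_const.mul (measurable_const.mul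
        ((htm.pow_const _).mul ((measurable_const.sub htm).pow_const _)))
    have hgbdd : ∀ u, ‖g u‖ ≤ ∑ r ∈ Finset.Icc 1 n, |q r * c r| := by
      intro u
      calc ‖g u‖ ≤ ∑ r ∈ Finset.Icc 1 n,
          ‖q r * (c r * (t u ^ (r - 1) * (1 - t u) ^ (n - r)))‖ := norm_sum_le _ _
        _ ≤ ∑ r ∈ Finset.Icc 1 n, |q r * c r| := by
            refine Finset.sum_le_sum fun r _ => ?_
            rw [Real.norm_eq_abs, ← mul_assoc, abs_mul]
            have h1 := kernel_bdd hint hpos hprob (r - 1) (n - r) u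
            have h2 : (0:ℝ) ≤ |q r * c r| := abs_nonneg _
            nlinarith [abs_nonneg (t u ^ (r - 1) * (1 - t u) ^ (n - r))]
    -- for each y, the weighted integral vanishes on every Iic x
    have haezero : ∀ y : ℝ, ∀ᵐ u : ℝ, g u * ∫ v in Set.Iic y, f u v = 0 := by
      intro y
      have hint_gw : Integrable (fun u => g u * ∫ v in Set.Iic y, f u v) :=
        (w_int hint y).bdd_mul hgmeas.aestronglyMeasurable (Eventually.of_forall hgbdd)
      refine aux_ae_zero hint_gw ?_
      intro x
      have hptws : ∀ u : ℝ, g u * ∫ v in Set.Iic y, f u v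
          = ∑ r ∈ Finset.Icc 1 n,
              q r * (c r * (t u ^ (r - 1) * (1 - t u) ^ (n - r) * ∫ v in Set.Iic y, f u v)) := by
        intro u
        rw [hg, Finset.sum_mul]
        exact Finset.sum_congr rfl fun r _ => by ring
      rw [setIntegral_congr_fun measurableSet_Iic (fun u _ => hptws u),
        integral_finset_sum]
      · have : ∀ r ∈ Finset.Icc 1 n,
            (∫ u in Set.Iic x, q r * (c r * (t u ^ (r - 1) * (1 - t u) ^ (n - r)
              * ∫ v in Set.Iic y, f u v))) = q r * concomCDF f n r x y := by
          intro r _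
          rw [integral_const_mul, concom_eq]
        rw [Finset.sum_congr rfl this]
        exact keyK x y
      · intro r _
        exact (((kernel_w_int hmeas hint hpos hprob (r - 1) (n - r) y).const_mul
          (c r)).const_mul (q r)).integrableOn
    -- pass to the limit y → ∞
    have hUnat : (⋃ k : ℕ, Set.Iic (k : ℝ)) = Set.univ := by
      ext z
      simp only [Set.mem_iUnion, Set.mem_Iic, Set.mem_univ, iff_true]
      exact exists_nat_ge z
    have hgm : ∀ᵐ u : ℝ, g u * ∫ v, f u v = 0 := by
      have hae_all : ∀ᵐ u : ℝ, ∀ k : ℕ, g u * ∫ v in Set.Iic (k : ℝ), f u v = 0 :=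
        ae_all_iff.mpr fun k => haezero (k : ℝ)
      filter_upwards [hae_all, (hint' hint).prod_right_ae] with u h1 h2
      have htend : Tendsto (fun k : ℕ => ∫ v in Set.Iic (k : ℝ), f u v) atTop
          (𝓝 (∫ v, f u v)) := by
        have := tendsto_setIntegral_of_monotone (μ := volume) (f := fun v => f u v)
          (s := fun k : ℕ => Set.Iic (k : ℝ)) (fun k => measurableSet_Iic)
          (fun i j hij => Set.Iic_subset_Iic.mpr (by exact_mod_cast hij))
          (by rw [hUnat]; exact integrableOn_univ.mpr h2)
        rwa [hUnat, setIntegral_univ] at this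
      have htend2 : Tendsto (fun k : ℕ => g u * ∫ v in Set.Iic (k : ℝ), f u v) atTop
          (𝓝 (g u * ∫ v, f u v)) := tendsto_const_nhds.mul htend
      have : (fun k : ℕ => g u * ∫ v in Set.Iic (k : ℝ), f u v) = fun _ => (0 : ℝ) :=
        funext h1
      rw [this] at htend2
      exact tendsto_nhds_unique htend2 tendsto_const_nhds
    -- polynomial endgame
    have hqi : q i ≠ 0 := sub_ne_zero.mpr hpi
    set S : Finset ℕ := (Finset.Icc 1 n).filter (fun r => q r ≠ 0) with hS
    have hiS : i ∈ S := Finset.mem_filter.mpr ⟨Finset.mem_Icc.mpr ⟨hi1, hin⟩, hqi⟩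
    have hSne : S.Nonempty := ⟨i, hiS⟩
    set r₀ : ℕ := S.min' hSne with hr₀
    have hr₀S : r₀ ∈ S := S.min'_mem hSne
    have hr₀Icc : r₀ ∈ Finset.Icc 1 n := (Finset.mem_filter.mp hr₀S).1
    have hr₀1 : 1 ≤ r₀ := (Finset.mem_Icc.mp hr₀Icc).1
    have hr₀n : r₀ ≤ n := (Finset.mem_Icc.mp hr₀Icc).2
    have hqr₀ : q r₀ ≠ 0 := (Finset.mem_filter.mp hr₀S).2
    have hqlt : ∀ r ∈ Finset.Icc 1 n, r < r₀ → q r = 0 := by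
      intro r hr hlt
      by_contra hqr
      exact absurd (S.min'_le r (Finset.mem_filter.mpr ⟨hr, hqr⟩)) (not_le.mpr hlt)
    set G : Polynomial ℝ := ∑ r ∈ Finset.Icc 1 n,
        Polynomial.C (q r * c r) * ((1 - Polynomial.X) ^ (n - r) * Polynomial.X ^ (r - 1))
      with hG
    have hgG : ∀ u, g u = G.eval (t u) := by
      intro u
      rw [hG, Polynomial.eval_finset_sum, hg]
      refine Finset.sum_congr rfl fun r _ => ?_
      simp only [Polynomial.eval_mul, Polynomial.eval_C, Polynomial.eval_pow,
        Polynomial.eval_sub, Polynomial.eval_one, Polynomial.eval_X]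
      ring
    have hcoeff : G.coeff (r₀ - 1) = q r₀ * c r₀ := by
      rw [hG, Polynomial.finset_sum_coeff]
      rw [Finset.sum_eq_single r₀]
      · rw [Polynomial.coeff_C_mul, Polynomial.coeff_mul_X_pow', if_pos le_rfl, Nat.sub_self,
          Polynomial.coeff_zero_eq_eval_zero]
        simp
      · intro r hr hne'
        rcases lt_or_gt_of_ne hne' with hlt | hgt
        · rw [hqlt r hr hlt]
          simp
        · rw [Polynomial.coeff_C_mul, Polynomial.coeff_mul_X_pow', if_neg (by omega)]
          simp
      · intro habs
        exact absurd hr₀Icc habs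
    have hcpos : 0 < c r₀ := by
      have h1 : 0 < (n : ℝ) := by exact_mod_cast Nat.pos_of_ne_zero (by omega)
      have h2 : 0 < (((n - 1).choose (r₀ - 1) : ℕ) : ℝ) := by
        exact_mod_cast Nat.choose_pos (by omega)
      exact mul_pos h1 h2
    have hGne : G ≠ 0 := by
      intro h0
      rw [h0, Polynomial.coeff_zero] at hcoeff
      exact absurd hcoeff.symm (mul_ne_zero hqr₀ (ne_of_gt hcpos))
    -- measure-theoretic contradiction
    set m : ℝ → ℝ := fun u => ∫ v, f u v with hm
    set ν : Measure ℝ := volume.withDensity (fun u => ENNReal.ofReal (m u)) with hν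
    have hν_univ : ν Set.univ = 1 := by
      rw [hν, withDensity_apply _ MeasurableSet.univ, setLIntegral_univ,
        ← ofReal_integral_eq_lintegral_ofReal (m_int hint)
          (Eventually.of_forall (m_nonneg hpos)),
        m_total hint hprob, ENNReal.ofReal_one]
    have hsmeas : MeasurableSet {u : ℝ | g u ≠ 0} :=
      (hgmeas (measurableSet_singleton (0:ℝ))).compl
    have hν_s : ν {u : ℝ | g u ≠ 0} = 0 := by
      rw [hν, withDensity_apply _ hsmeas]
      have hae0 : ∀ᵐ u ∂(volume.restrict {u : ℝ | g u ≠ 0}), ENNReal.ofReal (m u) = 0 := by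
        refine (ae_restrict_iff' hsmeas).mpr ?_
        filter_upwards [hgm] with u hu hus
        rcases mul_eq_zero.mp hu with h | h
        · exact absurd h hus
        · have hmu : m u = 0 := h
          rw [hmu]; exact ENNReal.ofReal_zero
      rw [lintegral_congr_ae hae0, lintegral_zero]
    have hν_roots : ν (⋃ z ∈ {x : ℝ | G.IsRoot x}, t ⁻¹' {z}) = 0 := by
      refine (measure_biUnion_null_iff (Polynomial.finite_setOf_isRoot hGne).countable).mpr ?_
      intro z _
      exact aux_preimage_null (m_int hint) (m_nonneg hpos) (fun u => rfl) z
    have hcover : (Set.univ : Set ℝ)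
        ⊆ {u : ℝ | g u ≠ 0} ∪ ⋃ z ∈ {x : ℝ | G.IsRoot x}, t ⁻¹' {z} := by
      intro u _
      by_cases hgu : g u = 0
      · refine Or.inr ?_
        refine Set.mem_biUnion ?_ rfl
        show G.IsRoot (t u)
        rw [Polynomial.IsRoot, ← hgG u, hgu]
      · exact Or.inl hgu
    have hfinal : (1 : ℝ≥0∞) ≤ 0 := by
      calc (1 : ℝ≥0∞) = ν Set.univ := hν_univ.symm
        _ ≤ ν ({u : ℝ | g u ≠ 0} ∪ ⋃ z ∈ {x : ℝ | G.IsRoot x}, t ⁻¹' {z}) :=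
            measure_mono hcover
        _ ≤ ν {u : ℝ | g u ≠ 0} + ν (⋃ z ∈ {x : ℝ | G.IsRoot x}, t ⁻¹' {z}) :=
            measure_union_le _ _
        _ = 0 := by rw [hν_s, hν_roots, add_zero]
    simp at hfinal

  · -- reverse direction
    intro hp x y
    have hAx := lemA hn hmeas hint hpos hprob x y
    have hrev : ∑ i ∈ Finset.Icc 1 n, concomCDF f n (n - i + 1) x y
        = ∑ r ∈ Finset.Icc 1 n, concomCDF f n r x y := by
      refine Finset.sum_nbij' (fun i => n - i + 1) (fun r => n - r + 1) ?_ ?_ ?_ ?_ ?_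
      · intro a ha; rw [Finset.mem_Icc] at *; omega
      · intro a ha; rw [Finset.mem_Icc] at *; omega
      · intro a ha; rw [Finset.mem_Icc] at ha; omega
      · intro a ha; rw [Finset.mem_Icc] at ha; omega
      · intro a ha; rfl
    constructor
    · calc ∑ i ∈ Finset.Icc 1 n, p i * concomCDF f n (n - i + 1) x y
          = ∑ i ∈ Finset.Icc 1 n, (1 / n : ℝ) * concomCDF f n (n - i + 1) x y := by
            refine Finset.sum_congr rfl fun i hi => ?_
            rw [Finset.mem_Icc] at hi
            rw [hp i hi.1 hi.2]
        _ = (1 / n : ℝ) * ∑ i ∈ Finset.Icc 1 n, concomCDF f n (n - i + 1) x y := by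
            rw [Finset.mul_sum]
        _ = jointCDF f x y := by rw [hrev, hAx]; field_simp
    · calc jointCDF f x y
          = (1 / n : ℝ) * ∑ r ∈ Finset.Icc 1 n, concomCDF f n r x y := by
            rw [hAx]; field_simp
        _ = ∑ i ∈ Finset.Icc 1 n, p i * concomCDF f n i x y := by
            rw [Finset.mul_sum]
            refine Finset.sum_congr rfl fun i hi => ?_
            rw [Finset.mem_Icc] at hi
            rw [hp i hi.1 hi.2]
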